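/- arXiv:1711.00906 — 2 statements merged into one kernel-verified Lean document; each statement's English description precedes it below -/
import Mathlib

section
/- Let k be a positive integer and let σ > 0, L, μ ∈ ℝ and c₀ < c₁ < c₂ be real numbers. Suppose α₁, …, α_{k+1} are nonnegative reals with Σ_{i=1}^{k+1} α_i = 1, and p₁, …, p_{k+1} are reals with p_i ≥ 3·σ·α_i for each i. Let P = Σ_{i=1}^{k+1} p_i and define the total cost C = c₀·(L − μ − P) + c₁·(Σ_{i=1}^{k} p_i) + c₂·p_{k+1}. Then C ≥ c₀·(L − μ − 3σ) + 3·c₁·σ, with equality if and only if p_{k+1} = 0 and P = 3σ. -/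
/-- Cost-optimality core of Lemma 4 of the paper (Figure 1 example). Generators
are indexed by `Fin (k+1)`, with `Fin.last k` playing the role of generator
`k+1` and the first `k` indices the generators `1,…,k`. The total cost
`C = c₀(L−μ−P) + c₁ Σ_{i≤k} p_i + c₂ p_{k+1}` satisfies
`C ≥ c₀(L−μ−3σ) + 3c₁σ`, with equality iff `p_{k+1} = 0` and `P = 3σ`. -/
theorem stmt5 (k : ℕ) (hk : 0 < k) (σ L μ c₀ c₁ c₂ : ℝ) (hσ : 0 < σ)
    (h01 : c₀ < c₁) (h12 : c₁ < c₂)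
    (α p : Fin (k + 1) → ℝ)
    (hα : ∀ i, 0 ≤ α i) (hsum : ∑ i, α i = 1)
    (hp : ∀ i, 3 * σ * α i ≤ p i) :
    c₀ * (L - μ - ∑ i, p i) + c₁ * (∑ i : Fin k, p i.castSucc) + c₂ * p (Fin.last k)
      ≥ c₀ * (L - μ - 3 * σ) + 3 * c₁ * σ ∧
    (c₀ * (L - μ - ∑ i, p i) + c₁ * (∑ i : Fin k, p i.castSucc) + c₂ * p (Fin.last k)
        = c₀ * (L - μ - 3 * σ) + 3 * c₁ * σ ↔
      p (Fin.last k) = 0 ∧ ∑ i, p i = 3 * σ) := by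
  have hP : 3 * σ ≤ ∑ i, p i := by
    calc 3 * σ = ∑ i, 3 * σ * α i := by
          rw [← Finset.mul_sum, hsum, mul_one]
      _ ≤ ∑ i, p i := Finset.sum_le_sum fun i _ => hp i
  have hlast : 0 ≤ p (Fin.last k) := by
    have := hp (Fin.last k)
    nlinarith [hα (Fin.last k), hσ.le]
  have hsplit : ∑ i, p i = (∑ i : Fin k, p i.castSucc) + p (Fin.last k) :=
    Fin.sum_univ_castSucc p
  have key1 : 0 ≤ (c₁ - c₀) * (∑ i, p i - 3 * σ) :=
    mul_nonneg (by linarith) (by linarith)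
  have key2 : 0 ≤ (c₂ - c₁) * p (Fin.last k) :=
    mul_nonneg (by linarith) hlast
  constructor
  · rw [hsplit]; rw [hsplit] at key1; nlinarith
  · constructor
    · intro heq
      rw [hsplit] at heq key1 hP
      have h1 : p (Fin.last k) = 0 := by nlinarith
      have h2 : ∑ i, p i = 3 * σ := by rw [hsplit]; nlinarith
      exact ⟨h1, h2⟩
    · rintro ⟨h1, h2⟩
      rw [hsplit] at h2 ⊢
      rw [h1] at h2 ⊢
      nlinarith
end

section
/- Let k be a positive integer, let D be a natural number and σ > 0. For nonnegative reals α₁, …, α_{k+1} with Σ_{i=1}^{k+1} α_i = 1, define the total line-flow variance V(α) = σ²·((Σ_{i=1}^{k} α_i)² + Σ_{i=1}^{k} α_i² + (D+1)·α_{k+1}²). Then: (i) if α_i = 1/k for 1 ≤ i ≤ k and α_{k+1} = 0, then V(α) = σ²·(1 + 1/k); (ii) if (Σ_{i=1}^{k} α_i)² = 1/2 (i.e., the variance of the flow on line ab is reduced by 50%), then V(α) ≥ σ²·(1/2 + (D+1)·(1 − √(1/2))²). -/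
/-- Variance computation of Section IV of the paper for the Figure 1 network:
`V(α) = σ²((Σ_{i≤k} α_i)² + Σ_{i≤k} α_i² + (D+1)α_{k+1}²)`. (i) With
`α_i = 1/k` for `i ≤ k` and `α_{k+1} = 0`, `V(α) = σ²(1 + 1/k)`. (ii) If the
variance on line `ab` is halved, i.e. `(Σ_{i≤k} α_i)² = 1/2`, then
`V(α) ≥ σ²(1/2 + (D+1)(1 − √(1/2))²)`. -/
theorem stmt6 (k D : ℕ) (hk : 0 < k) (σ : ℝ) (hσ : 0 < σ)
    (α : Fin (k + 1) → ℝ) (hα : ∀ i, 0 ≤ α i) (hsum : ∑ i, α i = 1) :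
    ((∀ i : Fin k, α i.castSucc = 1 / k) → α (Fin.last k) = 0 →
      σ ^ 2 * ((∑ i : Fin k, α i.castSucc) ^ 2 + (∑ i : Fin k, (α i.castSucc) ^ 2)
          + ((D : ℝ) + 1) * α (Fin.last k) ^ 2) = σ ^ 2 * (1 + 1 / k)) ∧
    ((∑ i : Fin k, α i.castSucc) ^ 2 = 1 / 2 →
      σ ^ 2 * (1 / 2 + ((D : ℝ) + 1) * (1 - Real.sqrt (1 / 2)) ^ 2)
        ≤ σ ^ 2 * ((∑ i : Fin k, α i.castSucc) ^ 2 + (∑ i : Fin k, (α i.castSucc) ^ 2)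
            + ((D : ℝ) + 1) * α (Fin.last k) ^ 2)) := by
  have hksplit : (∑ i : Fin k, α i.castSucc) + α (Fin.last k) = 1 := by
    rw [Fin.sum_univ_castSucc] at hsum; exact hsum
  have hk0 : (k : ℝ) ≠ 0 := Nat.cast_ne_zero.mpr hk.ne'
  constructor
  · intro h1 h2
    have e1 : (∑ i : Fin k, α i.castSucc) = 1 := by
      rw [Finset.sum_congr rfl (fun i _ => h1 i), Finset.sum_const]
      simp [mul_one_div, hk0]
    have e2 : (∑ i : Fin k, (α i.castSucc) ^ 2) = 1 / k := by
      rw [Finset.sum_congr rfl (fun i _ => by rw [h1 i]), Finset.sum_const]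
      field_simp
      rw [Finset.card_univ, Fintype.card_fin]
      rw [nsmul_eq_mul, ← mul_assoc, ← sq, mul_one_div_cancel (pow_ne_zero 2 hk0)]
    rw [e1, e2, h2]
    ring
  · intro hhalf
    set S := (∑ i : Fin k, α i.castSucc) with hS
    have hS0 : 0 ≤ S := Finset.sum_nonneg fun i _ => hα _
    have hSval : S = Real.sqrt (1 / 2) := by
      rw [← Real.sqrt_sq hS0, hhalf]
    have hlast : α (Fin.last k) = 1 - Real.sqrt (1 / 2) := by
      rw [← hSval]; linarith
    have hsq : 0 ≤ ∑ i : Fin k, (α i.castSucc) ^ 2 :=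
      Finset.sum_nonneg fun i _ => sq_nonneg _
    rw [hlast, hhalf]
    have hD : (0:ℝ) ≤ (D:ℝ) + 1 := by positivity
    nlinarith [sq_nonneg σ, mul_pos hσ hσ, sq_nonneg (1 - Real.sqrt (1/2))]
end
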